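/- Let A be a 2×2 real symmetric positive-definite matrix satisfying the Cordes condition |A|²/(Tr A)² ≤ 1/(1+ε) for some ε ∈ (0,1), and set γ := Tr A / |A|². Then for every symmetric 2×2 real matrix M, |γ (A : M) − Tr M| ≤ √(1−ε) · |M|, where A : M denotes the Frobenius inner product and |M| the Frobenius norm. -/

import Mathlib

open Matrix

private lemma cs4 (x1 x2 x3 x4 y1 y2 y3 y4 : ℝ) :
    |x1*y1+x2*y2+x3*y3+x4*y4| ≤
      Real.sqrt (x1^2+x2^2+x3^2+x4^2) * Real.sqrt (y1^2+y2^2+y3^2+y4^2) := by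
  have h : (x1*y1+x2*y2+x3*y3+x4*y4)^2 ≤
      (x1^2+x2^2+x3^2+x4^2)*(y1^2+y2^2+y3^2+y4^2) := by
    nlinarith [sq_nonneg (x1*y2-x2*y1), sq_nonneg (x1*y3-x3*y1), sq_nonneg (x1*y4-x4*y1),
      sq_nonneg (x2*y3-x3*y2), sq_nonneg (x2*y4-x4*y2), sq_nonneg (x3*y4-x4*y3)]
  calc |x1*y1+x2*y2+x3*y3+x4*y4| = Real.sqrt ((x1*y1+x2*y2+x3*y3+x4*y4)^2) :=
        (Real.sqrt_sq_eq_abs _).symm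
    _ ≤ Real.sqrt ((x1^2+x2^2+x3^2+x4^2)*(y1^2+y2^2+y3^2+y4^2)) := Real.sqrt_le_sqrt h
    _ = _ := Real.sqrt_mul (by positivity) _

/-- pointwise Cordes renormalization estimate: if the symmetric
positive-definite 2×2 matrix `A` satisfies the Cordes condition with parameter `ε`,
and `γ = Tr A / |A|²`, then for every symmetric `M`,
`|γ (A : M) − Tr M| ≤ √(1−ε) |M|` (Frobenius inner product and norm). -/
theorem cordes_renormalization_estimate
    (A : Matrix (Fin 2) (Fin 2) ℝ) (ε : ℝ)
    (hA : A.IsSymm) (hpos : A.PosDef) (hε : ε ∈ Set.Ioo (0 : ℝ) 1)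
    (hCordes : (∑ i, ∑ j, (A i j) ^ 2) / (A.trace) ^ 2 ≤ 1 / (1 + ε)) :
    ∀ M : Matrix (Fin 2) (Fin 2) ℝ, M.IsSymm →
      |(A.trace / ∑ i, ∑ j, (A i j) ^ 2) * (∑ i, ∑ j, A i j * M i j) - M.trace|
        ≤ Real.sqrt (1 - ε) * Real.sqrt (∑ i, ∑ j, (M i j) ^ 2) := by
  obtain ⟨hε0, hε1⟩ := hε
  intro M hM
  have h00 : 0 < A 0 0 := by
    have hne : (![1,0] : Fin 2 → ℝ) ≠ 0 := by
      intro h; exact one_ne_zero (congrFun h 0)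
    have := hpos.dotProduct_mulVec_pos hne
    simpa [dotProduct, Matrix.mulVec, Fin.sum_univ_two] using this
  have h11 : 0 < A 1 1 := by
    have hne : (![0,1] : Fin 2 → ℝ) ≠ 0 := by
      intro h; exact one_ne_zero (congrFun h 1)
    have := hpos.dotProduct_mulVec_pos hne
    simpa [dotProduct, Matrix.mulVec, Fin.sum_univ_two] using this
  set t : ℝ := A.trace with ht
  have htr : t = A 0 0 + A 1 1 := Matrix.trace_fin_two A
  have ht0 : 0 < t := by rw [htr]; linarith
  set a : ℝ := ∑ i, ∑ j, (A i j) ^ 2 with ha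
  have haval : a = (A 0 0)^2 + (A 0 1)^2 + (A 1 0)^2 + (A 1 1)^2 := by
    simp [ha, Fin.sum_univ_two]; ring
  have ha0 : 0 < a := by rw [haval]; nlinarith
  -- Cordes: t^2/a ≥ 1 + ε
  have hkey : a * (1 + ε) ≤ t ^ 2 := by
    have := (div_le_div_iff₀ (by positivity) (by positivity)).mp hCordes
    linarith
  -- the matrix B = (t/a) A - I entrywise
  set b00 : ℝ := (t/a) * A 0 0 - 1
  set b01 : ℝ := (t/a) * A 0 1
  set b10 : ℝ := (t/a) * A 1 0
  set b11 : ℝ := (t/a) * A 1 1 - 1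
  have hB : b00^2 + b01^2 + b10^2 + b11^2 = 2 - t^2/a := by
    have : b00^2 + b01^2 + b10^2 + b11^2 = (t/a)^2 * a - 2*(t/a)*t + 2 := by
      simp only [b00, b01, b10, b11, haval, htr]; ring
    rw [this]; field_simp; ring
  have hBle : b00^2 + b01^2 + b10^2 + b11^2 ≤ 1 - ε := by
    rw [hB]
    have : 1 + ε ≤ t^2/a := (le_div_iff₀ ha0).mpr (by linarith)
    linarith
  have hLHS : (t / a) * (∑ i, ∑ j, A i j * M i j) - M.trace
      = b00 * M 0 0 + b01 * M 0 1 + b10 * M 1 0 + b11 * M 1 1 := by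
    simp only [b00, b01, b10, b11, Fin.sum_univ_two, Matrix.trace_fin_two]; ring
  have hM2 : (∑ i, ∑ j, (M i j) ^ 2) = (M 0 0)^2 + (M 0 1)^2 + (M 1 0)^2 + (M 1 1)^2 := by
    simp [Fin.sum_univ_two]; ring
  rw [hLHS, hM2]
  calc |b00 * M 0 0 + b01 * M 0 1 + b10 * M 1 0 + b11 * M 1 1|
      ≤ Real.sqrt (b00^2 + b01^2 + b10^2 + b11^2) *
        Real.sqrt ((M 0 0)^2 + (M 0 1)^2 + (M 1 0)^2 + (M 1 1)^2) := cs4 _ _ _ _ _ _ _ _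
    _ ≤ Real.sqrt (1 - ε) * Real.sqrt ((M 0 0)^2 + (M 0 1)^2 + (M 1 0)^2 + (M 1 1)^2) := by
        apply mul_le_mul_of_nonneg_right (Real.sqrt_le_sqrt hBle) (Real.sqrt_nonneg _)
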